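/- Let X be a real Hilbert space, g ∈ X*, and for each u ∈ X let a(u;·,·) be a bilinear form on X which is symmetric (a(u;v,w) = a(u;w,v)), uniformly coercive (a(u;v,v) ≥ α‖v‖_X² with α > 0 independent of u), and uniformly bounded (a(u;v,w) ≤ β‖v‖_X‖w‖_X with β > 0 independent of u). Define F : X → X* by ⟨F(u),v⟩ = a(u;u,v) − ⟨g,v⟩. Assume there is a functional G : X → ℝ such that (K1) for all u, v ∈ X the function t ↦ G(u + t v) is differentiable with derivative t ↦ a(u+tv; u+tv, v), the map u ↦ a(u;u,·) is continuous from X to X* (for each v ∈ X, u ↦ a(u;u,v) is continuous), and u ↦ a(u;u,·) is strongly monotone with some constant c₀ > 0; and (K2) G(u) − G(v) ≥ ½(a(u;u,u) − a(u;v,v)) for all u, v ∈ X. If {uⁿ}ₙ₌₀^∞ ⊆ X is the Kačanov iteration, i.e. a(uⁿ; uⁿ⁺¹, v) = ⟨g, v⟩ for all v ∈ X and n ≥ 0, then {uⁿ} converges in norm to the unique element u* ∈ X satisfying ⟨F(u*), v⟩ = 0 for all v ∈ X. -/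

import Mathlib

/-- Convergence of the Kačanov iteration. -/
theorem kacanov_convergence
    {X : Type*} [NormedAddCommGroup X] [InnerProductSpace ℝ X] [CompleteSpace X]
    (g : X →L[ℝ] ℝ) (a : X → X →ₗ[ℝ] X →ₗ[ℝ] ℝ)
    (α β : ℝ) (hα : 0 < α) (hβ : 0 < β)
    (hsymm : ∀ u v w : X, a u v w = a u w v)
    (hcoer : ∀ u v : X, α * ‖v‖ ^ 2 ≤ a u v v)
    (hbdd : ∀ u v w : X, a u v w ≤ β * ‖v‖ * ‖w‖)
    (F : X → X →L[ℝ] ℝ) (hF : ∀ u v : X, F u v = a u u v - g v)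
    (G : X → ℝ)
    -- (K1): G'(u) = a(u;u,·) in the Gâteaux sense
    (hG' : ∀ u v : X, ∀ t : ℝ,
      HasDerivAt (fun s : ℝ => G (u + s • v)) (a (u + t • v) (u + t • v) v) t)
    (hcont : ∀ v : X, Continuous fun u => a u u v)
    (c₀ : ℝ) (hc₀ : 0 < c₀)
    (hGmono : ∀ u v : X,
      c₀ * ‖u - v‖ ^ 2 ≤ a u u (u - v) - a v v (u - v))
    -- (K2)
    (hK2 : ∀ u v : X, G u - G v ≥ (a u u u - a u v v) / 2)
    (u : ℕ → X)
    (hiter : ∀ n : ℕ, ∀ v : X, a (u n) (u (n + 1)) v = g v) :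
    ∃ ustar : X, Filter.Tendsto u Filter.atTop (nhds ustar) ∧
      (∀ v : X, F ustar v = 0) ∧
      (∀ w : X, (∀ v : X, F w v = 0) → w = ustar) := by
  classical
  set d : ℕ → X := fun n => u n - u (n + 1) with hd
  -- Step 1: lower bound G y ≥ G 0 + α‖y‖²/2
  have hGlow : ∀ y : X, G 0 + α * ‖y‖ ^ 2 / 2 ≤ G y := by
    intro y
    set φ : ℝ → ℝ := fun t => G (t • y) - α * t ^ 2 * ‖y‖ ^ 2 / 2 with hφ
    have hφ' : ∀ t : ℝ, HasDerivAt φ (a (t • y) (t • y) y - α * t * ‖y‖ ^ 2) t := by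
      intro t
      have h1 := hG' 0 y t
      simp only [zero_add] at h1
      have h2 : HasDerivAt (fun t : ℝ => α * t ^ 2 * ‖y‖ ^ 2 / 2)
          (α * t * ‖y‖ ^ 2) t := by
        have hfun : (fun t : ℝ => α * t ^ 2 * ‖y‖ ^ 2 / 2)
            = fun t : ℝ => (α * ‖y‖ ^ 2 / 2) * t ^ 2 := by ext s; ring
        rw [hfun]
        have h3 := (hasDerivAt_pow 2 t).const_mul (α * ‖y‖ ^ 2 / 2)
        refine h3.congr_deriv ?_
        push_cast
        ring
      exact h1.sub h2
    have hmono : MonotoneOn φ (Set.Icc (0 : ℝ) 1) := by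
      apply monotoneOn_of_deriv_nonneg (convex_Icc 0 1)
      · have hdiff : Differentiable ℝ φ := fun t => (hφ' t).differentiableAt
        exact hdiff.continuous.continuousOn
      · exact fun t _ => (hφ' t).differentiableAt.differentiableWithinAt
      · intro t ht
        rw [interior_Icc] at ht
        rw [(hφ' t).deriv]
        have hsm : a (t • y) (t • y) y = t * a (t • y) y y := by
          rw [map_smul, LinearMap.smul_apply, smul_eq_mul]
        have hco := hcoer (t • y) y
        have ht0 : (0 : ℝ) ≤ t := le_of_lt ht.1
        nlinarith
    have h01 := hmono (Set.mem_Icc.mpr ⟨le_refl 0, zero_le_one⟩)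
      (Set.mem_Icc.mpr ⟨zero_le_one, le_refl 1⟩) zero_le_one
    simp only [hφ, zero_smul, one_smul] at h01
    nlinarith [h01]
  -- Step 2: energy decrease
  set J : ℕ → ℝ := fun n => G (u n) - g (u n) with hJ
  have hgap : ∀ n, J (n + 1) + α / 2 * ‖d n‖ ^ 2 ≤ J n := by
    intro n
    have h1 := hK2 (u n) (u (n + 1))
    have h2 : g (u n) - g (u (n + 1)) = a (u n) (u (n + 1)) (u n - u (n + 1)) := by
      rw [hiter n (u n - u (n + 1)), map_sub]
    have hco := hcoer (u n) (u n - u (n + 1))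
    have hexp : a (u n) (u n - u (n + 1)) (u n - u (n + 1))
        = a (u n) (u n) (u n) - 2 * a (u n) (u (n + 1)) (u n)
          + a (u n) (u (n + 1)) (u (n + 1)) := by
      simp only [map_sub, LinearMap.sub_apply]
      rw [hsymm (u n) (u n) (u (n + 1))]
      ring
    have hexp2 : a (u n) (u (n + 1)) (u n - u (n + 1))
        = a (u n) (u (n + 1)) (u n) - a (u n) (u (n + 1)) (u (n + 1)) := by
      rw [map_sub]
    simp only [hJ, hd]
    nlinarith [h1, h2, hco, hexp, hexp2]
  have hJanti : Antitone J := antitone_nat_of_succ_le fun n => by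
    have h := hgap n
    have hnn : 0 ≤ α / 2 * ‖d n‖ ^ 2 := by positivity
    exact le_trans (le_add_of_nonneg_right hnn) h
  -- bounded below
  have hJlow : ∀ n, G 0 - ‖g‖ ^ 2 / (2 * α) ≤ J n := by
    intro n
    have h1 := hGlow (u n)
    have h2 : g (u n) ≤ ‖g‖ * ‖u n‖ := by
      calc g (u n) ≤ |g (u n)| := le_abs_self _
      _ = ‖g (u n)‖ := (Real.norm_eq_abs _).symm
      _ ≤ ‖g‖ * ‖u n‖ := g.le_opNorm _
    have key : ‖g‖ * ‖u n‖ - α / 2 * ‖u n‖ ^ 2 ≤ ‖g‖ ^ 2 / (2 * α) := by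
      rw [le_div_iff₀ (by positivity : (0:ℝ) < 2 * α)]
      nlinarith [sq_nonneg (α * ‖u n‖ - ‖g‖)]
    simp only [hJ]
    linarith
  -- J converges, gaps → 0
  have hJconv : ∃ L, Filter.Tendsto J Filter.atTop (nhds L) := by
    refine ⟨⨅ n, J n, tendsto_atTop_ciInf hJanti ?_⟩
    exact ⟨G 0 - ‖g‖ ^ 2 / (2 * α), fun x ⟨n, hn⟩ => hn ▸ hJlow n⟩
  obtain ⟨L, hL⟩ := hJconv
  have hd0 : Filter.Tendsto (fun n => ‖d n‖) Filter.atTop (nhds 0) := by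
    have hdiff : Filter.Tendsto (fun n => J n - J (n + 1)) Filter.atTop (nhds 0) := by
      have := hL.sub (hL.comp (Filter.tendsto_add_atTop_nat 1))
      simpa using this
    have hsq : Filter.Tendsto (fun n => α / 2 * ‖d n‖ ^ 2) Filter.atTop (nhds 0) := by
      apply squeeze_zero (fun n => by positivity) (fun n => by linarith [hgap n]) hdiff
    have hsq2 : Filter.Tendsto (fun n => ‖d n‖ ^ 2) Filter.atTop (nhds 0) := by
      have h := hsq.const_mul (2 / α)
      simp only [mul_zero] at h
      have heq : (fun n => (2 / α) * (α / 2 * ‖d n‖ ^ 2)) = fun n => ‖d n‖ ^ 2 := by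
        funext n; field_simp
      rwa [heq] at h
    have h := (Real.continuous_sqrt.tendsto 0).comp hsq2
    rw [Real.sqrt_zero] at h
    have heq : (Real.sqrt ∘ fun n => ‖d n‖ ^ 2) = fun n => ‖d n‖ := by
      funext n
      simp [Function.comp, Real.sqrt_sq (norm_nonneg _)]
    rwa [heq] at h
  -- Step 3: Cauchy
  have hres : ∀ n (v : X), a (u n) (u n) v - g v = a (u n) (d n) v := by
    intro n v
    simp only [hd, map_sub, LinearMap.sub_apply]
    rw [hiter n v]
  have habs : ∀ (w : X) n (v : X), |a w (d n) v| ≤ β * ‖d n‖ * ‖v‖ := by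
    intro w n v
    rw [abs_le]
    constructor
    · have := hbdd w (-(d n)) v
      rw [map_neg, LinearMap.neg_apply, norm_neg] at this
      linarith
    · exact hbdd w (d n) v
  have hkey : ∀ n m, c₀ * ‖u n - u m‖ ≤ β * ‖d n‖ + β * ‖d m‖ := by
    intro n m
    have h1 := hGmono (u n) (u m)
    set w := u n - u m with hw
    have hn : a (u n) (u n) w - a (u m) (u m) w
        = a (u n) (d n) w - a (u m) (d m) w := by
      have e1 := hres n w
      have e2 := hres m w
      linarith
    have h2 : c₀ * ‖w‖ ^ 2 ≤ β * ‖d n‖ * ‖w‖ + β * ‖d m‖ * ‖w‖ := by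
      have b1 := (abs_le.mp (habs (u n) n w)).2
      have b2 := (abs_le.mp (habs (u m) m w)).1
      nlinarith [h1]
    rcases eq_or_lt_of_le (norm_nonneg w) with h0 | h0
    · rw [← h0]
      have : 0 ≤ β * ‖d n‖ + β * ‖d m‖ := by positivity
      linarith
    · have h5 : (c₀ * ‖w‖) * ‖w‖ ≤ (β * ‖d n‖ + β * ‖d m‖) * ‖w‖ := by
        nlinarith [h2]
      exact le_of_mul_le_mul_right h5 h0
  have hcauchy : CauchySeq u := by
    rw [Metric.cauchySeq_iff]
    intro ε hε
    have hsmall : ∀ᶠ n in Filter.atTop, ‖d n‖ < c₀ * ε / (2 * β) :=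
      hd0.eventually_lt_const (by positivity)
    obtain ⟨N, hN⟩ := Filter.eventually_atTop.mp hsmall
    refine ⟨N, fun m hm n hn => ?_⟩
    rw [dist_eq_norm]
    have h1 := hkey m n
    have h2 := hN m hm
    have h3 := hN n hn
    have : c₀ * ‖u m - u n‖ < c₀ * ε := by
      calc c₀ * ‖u m - u n‖ ≤ β * ‖d m‖ + β * ‖d n‖ := h1
      _ < β * (c₀ * ε / (2 * β)) + β * (c₀ * ε / (2 * β)) := by
          apply add_lt_add <;> exact mul_lt_mul_of_pos_left (by assumption) hβ
      _ = c₀ * ε := by field_simp; ring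
    exact lt_of_mul_lt_mul_left this (le_of_lt hc₀)
  obtain ⟨ustar, hustar⟩ := cauchySeq_tendsto_of_complete hcauchy
  -- Step 4: F ustar = 0
  have hFzero : ∀ v : X, F ustar v = 0 := by
    intro v
    have h1 : Filter.Tendsto (fun n => a (u n) (u n) v) Filter.atTop
        (nhds (a ustar ustar v)) := ((hcont v).tendsto ustar).comp hustar
    have h2 : Filter.Tendsto (fun n => a (u n) (u n) v - g v) Filter.atTop (nhds 0) := by
      have hb : ∀ n, ‖a (u n) (u n) v - g v‖ ≤ β * ‖d n‖ * ‖v‖ := by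
        intro n
        rw [hres n v, Real.norm_eq_abs]
        exact habs (u n) n v
      have hbt : Filter.Tendsto (fun n => β * ‖d n‖ * ‖v‖) Filter.atTop (nhds 0) := by
        have := (hd0.const_mul β).mul_const ‖v‖
        simpa using this
      exact squeeze_zero_norm hb hbt
    have h3 : Filter.Tendsto (fun n => a (u n) (u n) v) Filter.atTop (nhds (g v)) := by
      have := h2.add_const (g v)
      simpa using this
    have heq := tendsto_nhds_unique h1 h3
    rw [hF]
    linarith [le_of_eq heq, ge_of_eq heq]
  refine ⟨ustar, hustar, hFzero, fun w hw => ?_⟩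
  have h1 := hGmono w ustar
  have h2 : a w w (w - ustar) = g (w - ustar) := by
    have := hw (w - ustar); rw [hF] at this; linarith
  have h3 : a ustar ustar (w - ustar) = g (w - ustar) := by
    have := hFzero (w - ustar); rw [hF] at this; linarith
  rw [h2, h3, sub_self] at h1
  have h5 : ‖w - ustar‖ = 0 := by
    have h6 : ‖w - ustar‖ ^ 2 = 0 := le_antisymm (by nlinarith) (sq_nonneg _)
    exact pow_eq_zero_iff (by norm_num) |>.mp h6
  exact sub_eq_zero.mp (norm_eq_zero.mp h5)
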